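/- For every dimension d ≥ 2, every Δ > 0, and every even n = 2m with m ≥ 1, there exist vectors φ₁, …, φₙ ∈ ℝ^d with ‖φᵢ‖₂ ≤ 1 for all i, reals y₁, …, yₙ with |yᵢ| ≤ Δ for all i, and a vector φ ∈ ℝ^d with ‖φ‖₂ ≤ 1, such that |⟨wₙ, φ⟩| ≥ (1/2)·Δ·√n, where Λₙ = Σᵢ₌₁ⁿ φᵢφᵢᵀ + I is the regularized Gram matrix (with regularization λ = 1) and wₙ = Λₙ⁻¹ Σᵢ₌₁ⁿ yᵢφᵢ is the ridge-regression coefficient. -/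

import Mathlib

open Matrix Finset

/-- For every dimension `d ≥ 2`, every `Δ > 0`, and every even `n = 2m` with `m ≥ 1`,
there exist vectors `φ₁, …, φₙ ∈ ℝ^d` with `‖φᵢ‖₂ ≤ 1`, reals `y₁, …, yₙ` with `|yᵢ| ≤ Δ`,
and a vector `φ` with `‖φ‖₂ ≤ 1`, such that `|⟨wₙ, φ⟩| ≥ (1/2)·Δ·√n`, where
`Λₙ = Σᵢ φᵢφᵢᵀ + I` and `wₙ = Λₙ⁻¹ Σᵢ yᵢφᵢ`. -/
theorem stmt_0 (d : ℕ) (hd : 2 ≤ d) (Δ : ℝ) (hΔ : 0 < Δ) (m : ℕ) (hm : 1 ≤ m)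
    (n : ℕ) (hn : n = 2 * m) :
    ∃ (φs : Fin n → (Fin d → ℝ)) (y : Fin n → ℝ) (φ : Fin d → ℝ),
      (∀ i, Real.sqrt (∑ j, φs i j ^ 2) ≤ 1) ∧
      (∀ i, |y i| ≤ Δ) ∧
      Real.sqrt (∑ j, φ j ^ 2) ≤ 1 ∧
      (1 / 2) * Δ * Real.sqrt n ≤
        |((((∑ i, vecMulVec (φs i) (φs i)) + (1 : Matrix (Fin d) (Fin d) ℝ))⁻¹ *ᵥ
            (∑ i, y i • φs i)) ⬝ᵥ φ)| := by
  haveI : NeZero d := ⟨by omega⟩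
  have hn2 : (2:ℕ) ≤ n := by omega
  have hnpos : (0:ℝ) < n := by exact_mod_cast (by omega : 0 < n)
  set s := Real.sqrt n with hs
  have hspos : 0 < s := Real.sqrt_pos.mpr hnpos
  have hs2 : s * s = n := Real.mul_self_sqrt hnpos.le
  set v : Fin d → ℝ := fun j => if j = 0 then 1/s else 0 with hv
  refine ⟨fun _ => v, fun _ => Δ, fun j => if j = 0 then 1 else 0, ?_, ?_, ?_, ?_⟩
  · intro i
    have : ∑ j, v j ^ 2 = (1/s)^2 := by
      simp [hv, apply_ite (· ^ 2), Finset.sum_ite_eq']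
    rw [this]
    rw [Real.sqrt_sq (by positivity)]
    rw [div_le_one hspos]
    have : (1:ℝ) ≤ n := by exact_mod_cast (by omega : 1 ≤ n)
    nlinarith [hs2, hspos]
  · intro i; simp [abs_of_pos hΔ]
  · have : ∑ j : Fin d, (if j = 0 then (1:ℝ) else 0) ^ 2 = 1 := by
      simp [apply_ite (· ^ 2), Finset.sum_ite_eq']
    rw [this, Real.sqrt_one]
  · set w : Fin d → ℝ := fun j => if j = 0 then 2 else 1 with hw
    have hΛ : (∑ _i : Fin n, vecMulVec v v) + (1 : Matrix (Fin d) (Fin d) ℝ)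
        = diagonal w := by
      have h1 : (1/s) * (1/s) = 1/(n:ℝ) := by
        rw [div_mul_div_comm, one_mul, hs2]
      ext j k
      simp only [Finset.sum_const, Finset.card_univ, Fintype.card_fin,
        Matrix.add_apply, Matrix.smul_apply, vecMulVec_apply, Matrix.one_apply,
        diagonal_apply, hw, hv, smul_eq_mul]
      rcases eq_or_ne j 0 with hj | hj <;> rcases eq_or_ne k 0 with hk | hk
      · simp only [hj, hk, if_pos rfl, h1]
        field_simp
        simp only [↓reduceIte, nsmul_eq_mul]
        rw [sq, h1, mul_one_div_cancel hnpos.ne']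
        norm_num
      · simp [hj, hk, Ne.symm hk]
      · simp [hj, hk]
      · rcases eq_or_ne j k with hjk | hjk <;> simp [hj, hk, hjk]
    have hb : (∑ _i : Fin n, Δ • v) = ((n:ℝ) * Δ) • v := by
      rw [Finset.sum_const, Finset.card_univ, Fintype.card_fin]
      ext j
      simp only [Pi.smul_apply, nsmul_eq_mul, smul_eq_mul]
      ring
    have hinv : (diagonal w)⁻¹ = diagonal (fun j => (w j)⁻¹) := by
      apply Matrix.inv_eq_right_inv
      rw [diagonal_mul_diagonal]
      have h2 : ∀ j, w j * (w j)⁻¹ = 1 := by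
        intro j
        rcases eq_or_ne j 0 with hj | hj <;> simp [hw, hj]
      simp only [h2]
      exact diagonal_one
    rw [hΛ, hb, hinv]
    have hval : (diagonal (fun j => (w j)⁻¹) *ᵥ (((n:ℝ) * Δ) • v)) ⬝ᵥ
        (fun j => if j = 0 then (1:ℝ) else 0) =
        (2:ℝ)⁻¹ * ((n:ℝ) * Δ * (1/s)) := by
      rw [dotProduct]
      rw [Finset.sum_eq_single 0]
      · rw [Matrix.mulVec_diagonal]
        simp [hw, hv]
      · intro j _ hj; simp [hj]
      · simp
    rw [hval]
    have : (2:ℝ)⁻¹ * ((n:ℝ) * Δ * (1/s)) = 1/2 * Δ * s := by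
      field_simp
      nlinarith [hs2]
    rw [this, abs_of_nonneg (by positivity)]
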